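/- arXiv:2602.09830 — 2 statements merged into one kernel-verified Lean document; each statement's English description precedes it below -/
import Mathlib

section
/- Let Q be a quasi-order, let σ be an indecomposable transfinite sequence over Q, and let τ_0, τ_1, …, τ_{k-1} (for some finite k ≥ 1) be arbitrary transfinite sequences over Q. If σ is embeddable in the concatenation τ_0 + τ_1 + ⋯ + τ_{k-1}, then σ is embeddable in τ_j for some j < k. -/
universe u v

open Ordinal

/-- A quasi-order: a reflexive transitive binary relation. -/
def IsQO {Q : Type u} (le : Q → Q → Prop) : Prop :=
  Reflexive le ∧ Transitive le

/-- A (nonempty) transfinite sequence over `Q` : a length `> 0` together with values;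
values at indices `≥ length` are irrelevant junk. -/
structure TSeq (Q : Type u) : Type (u + 1) where
  length : Ordinal.{u}
  length_pos : 0 < length
  val : Ordinal.{u} → Q

/-- Sequence embeddability `σ ≼ τ` : there is a strictly increasing (hence injective) map
of the indices of `σ` into the indices of `τ` which respects the quasi-order on values. -/
def SeqLE {Q : Type u} (le : Q → Q → Prop) (σ τ : TSeq Q) : Prop :=
  ∃ f : Ordinal.{u} → Ordinal.{u},
    (∀ i, i < σ.length → f i < τ.length) ∧
    (∀ i j, i < j → j < σ.length → f i < f j) ∧
    (∀ i, i < σ.length → le (σ.val i) (τ.val (f i)))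

/-- A sequence has finite range if only finitely many elements of `Q` occur in it. -/
def TSeq.FinRange {Q : Type u} (σ : TSeq Q) : Prop :=
  (σ.val '' Set.Iio σ.length).Finite

/-- The proper tail of `σ` starting at index `δ` (of length `-δ + |σ|`). -/
noncomputable def TSeq.tail {Q : Type u} (σ : TSeq Q) (δ : Ordinal.{u})
    (h : δ < σ.length) : TSeq Q where
  length := σ.length - δ
  length_pos := Ordinal.lt_sub.mpr (by simpa using h)
  val := fun i => σ.val (δ + i)

/-- A sequence is indecomposable if it embeds into each of its proper tails. -/
def Indecomposable {Q : Type u} (le : Q → Q → Prop) (σ : TSeq Q) : Prop :=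
  ∀ (δ : Ordinal.{u}) (_ : 0 < δ) (h : δ < σ.length), SeqLE le σ (σ.tail δ h)

open Classical in
/-- Concatenation of transfinite sequences: a copy of `τ` placed after a copy of `σ`. -/
noncomputable def TSeq.concat {Q : Type u} (σ τ : TSeq Q) : TSeq Q where
  length := σ.length + τ.length
  length_pos := lt_of_lt_of_le σ.length_pos (le_add_right le_rfl)
  val := fun i => if i < σ.length then σ.val i else τ.val (i - σ.length)

/-- The concatenation `σ + τ₀ + τ₁ + ⋯` of a nonempty finite list of sequences. -/
noncomputable def TSeq.concatAll {Q : Type u} (σ : TSeq Q) (l : List (TSeq Q)) : TSeq Q :=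
  l.foldl TSeq.concat σ


private theorem seqLE_trans {Q : Type u} (le : Q → Q → Prop) (ht : Transitive le)
    {σ τ ρ : TSeq Q} (h1 : SeqLE le σ τ) (h2 : SeqLE le τ ρ) : SeqLE le σ ρ := by
  obtain ⟨f, hf1, hf2, hf3⟩ := h1
  obtain ⟨g, hg1, hg2, hg3⟩ := h2
  exact ⟨g ∘ f, fun i hi => hg1 _ (hf1 i hi),
    fun i j hij hj => hg2 _ _ (hf2 i j hij hj) (hf1 j hj),
    fun i hi => ht (hf3 i hi) (hg3 _ (hf1 i hi))⟩

private theorem seqLE_concat {Q : Type u} (le : Q → Q → Prop) (hqo : IsQO le)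
    (σ : TSeq Q) (hσ : Indecomposable le σ)
    (τ₁ τ₂ : TSeq Q) (h : SeqLE le σ (τ₁.concat τ₂)) :
    SeqLE le σ τ₁ ∨ SeqLE le σ τ₂ := by
  obtain ⟨f, hf1, hf2, hf3⟩ := h
  set L := τ₁.length with hL
  by_cases hc : ∀ i, i < σ.length → f i < L
  · left
    refine ⟨f, hc, hf2, fun i hi => ?_⟩
    have := hf3 i hi
    simpa [TSeq.concat, show f i < τ₁.length from hc i hi] using this
  · right
    push_neg at hc
    obtain ⟨δ, hδσ, hδL⟩ := hc
    have hmono : ∀ i, δ ≤ i → i < σ.length → L ≤ f i := by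
      intro i hle hi
      rcases eq_or_lt_of_le hle with rfl | hlt
      · exact hδL
      · exact hδL.trans (hf2 δ i hlt hi).le
    rcases eq_or_lt_of_le (zero_le : 0 ≤ δ) with rfl | hδ0
    · refine ⟨fun i => f i - L, ?_, ?_, ?_⟩
      · intro i hi
        have hLi := hmono i (zero_le : 0 ≤ i) hi
        rw [Ordinal.sub_lt_of_le hLi]
        exact hf1 i hi
      · intro i j hij hj
        have hLi := hmono i (zero_le : 0 ≤ i) (hij.trans hj)
        have hLj := hmono j (zero_le : 0 ≤ j) hj
        have := hf2 i j hij hj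
        rwa [← Ordinal.add_sub_cancel_of_le hLi, ← Ordinal.add_sub_cancel_of_le hLj,
          add_lt_add_iff_left] at this
      · intro i hi
        have hLi := hmono i (zero_le : 0 ≤ i) hi
        have := hf3 i hi
        simpa [TSeq.concat, show ¬ f i < τ₁.length from not_lt.mpr hLi] using this
    · have htail : SeqLE le (σ.tail δ hδσ) τ₂ := by
        refine ⟨fun i => f (δ + i) - L, ?_, ?_, ?_⟩
        · intro i hi
          have hlt : δ + i < σ.length := Ordinal.lt_sub.mp hi
          have hLi := hmono _ (le_self_add : δ ≤ δ + i) hlt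
          rw [Ordinal.sub_lt_of_le hLi]
          exact hf1 _ hlt
        · intro i j hij hj
          have hltj : δ + j < σ.length := Ordinal.lt_sub.mp hj
          have hlti : δ + i < δ + j := (add_lt_add_iff_left δ).mpr hij
          have hLi := hmono _ (le_self_add : δ ≤ δ + i) (hlti.trans hltj)
          have hLj := hmono _ (le_self_add : δ ≤ δ + j) hltj
          have := hf2 _ _ hlti hltj
          rwa [← Ordinal.add_sub_cancel_of_le hLi, ← Ordinal.add_sub_cancel_of_le hLj,
            add_lt_add_iff_left] at this
        · intro i hi
          have hlt : δ + i < σ.length := Ordinal.lt_sub.mp hi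
          have hLi := hmono _ (le_self_add : δ ≤ δ + i) hlt
          have := hf3 _ hlt
          simpa [TSeq.concat, TSeq.tail, show ¬ f (δ + i) < τ₁.length from not_lt.mpr hLi] using this
      exact seqLE_trans le hqo.2 (hσ δ hδ0 hδσ) htail

/-- If an indecomposable sequence `σ` embeds in a finite concatenation
`τ₀ + τ₁ + ⋯ + τ_{k-1}` (with `k ≥ 1`) of arbitrary transfinite sequences, then `σ`
embeds in `τ_j` for some `j < k`. -/
theorem indecomposable_seqLE_concatAll {Q : Type u}
    (le : Q → Q → Prop) (hqo : IsQO le)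
    (σ : TSeq Q) (hσ : Indecomposable le σ)
    (τ : TSeq Q) (τs : List (TSeq Q))
    (h : SeqLE le σ (TSeq.concatAll τ τs)) :
    ∃ c ∈ τ :: τs, SeqLE le σ c := by
  induction τs generalizing τ with
  | nil => exact ⟨τ, List.mem_cons_self, h⟩
  | cons t rest ih =>
    obtain ⟨c, hc, hsc⟩ := ih (τ.concat t) h
    rcases List.mem_cons.mp hc with rfl | hm
    · rcases seqLE_concat le hqo σ hσ τ t hsc with h1 | h2
      · exact ⟨τ, List.mem_cons_self, h1⟩
      · exact ⟨t, List.mem_cons.mpr (Or.inr (List.mem_cons_self)), h2⟩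
    · exact ⟨c, List.mem_cons.mpr (Or.inr (List.mem_cons.mpr (Or.inr hm))), hsc⟩
end

section
/- Fix n < ω, and assume that for every finite quasi-order P the quasi-order i^F_{ω^n}(P) is a well-quasi-order. Then for any quasi-order Q: (1) every finite-range transfinite sequence σ over Q of length exactly ω^n is either indecomposable, or decomposes as a concatenation σ_0 + σ_1 where σ_0 is a finite-range sequence over Q of length < ω^n and σ_1 is an indecomposable finite-range sequence over Q of length exactly ω^n; and (2) every finite-range transfinite sequence σ over Q of length < ω^{n+1} decomposes as a finite concatenation σ_0 + σ_1 + ⋯ + σ_{k-1} of indecomposable finite-range sequences over Q, each of length < ω^{n+1}. -/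
universe u v

open Ordinal

/-- A well-quasi-order: a quasi-order in which every infinite sequence of elements
contains a weakly increasing pair. -/
def IsWQO {Q : Type u} (le : Q → Q → Prop) : Prop :=
  IsQO le ∧ ∀ f : ℕ → Q, ∃ i j : ℕ, i < j ∧ le (f i) (f j)

/-- Two sequences are equal as sequences: same length and same values below the length
(the junk values beyond the length are irrelevant). -/
def TSeq.ValEq {Q : Type u} (σ τ : TSeq Q) : Prop :=
  σ.length = τ.length ∧ ∀ i, i < σ.length → σ.val i = τ.val i

/-- `i^F_α(Q)` : indecomposable nonempty finite-range transfinite sequences over `Q`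
of length `< α`. -/
def iF (Q : Type u) (le : Q → Q → Prop) (α : Ordinal.{u}) : Type (u + 1) :=
  {σ : TSeq Q // σ.length < α ∧ σ.FinRange ∧ Indecomposable le σ}


namespace SeqAux

open Ordinal

variable {Q : Type u} {le : Q → Q → Prop}

theorem seqLE_refl (hr : Reflexive le) (σ : TSeq Q) : SeqLE le σ σ :=
  ⟨id, fun _ h => h, fun _ _ h _ => h, fun i _ => hr _⟩

theorem seqLE_trans (ht : Transitive le) {σ τ ρ : TSeq Q} (h₁ : SeqLE le σ τ)
    (h₂ : SeqLE le τ ρ) : SeqLE le σ ρ := by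
  obtain ⟨f, hf1, hf2, hf3⟩ := h₁
  obtain ⟨g, hg1, hg2, hg3⟩ := h₂
  exact ⟨g ∘ f, fun i hi => hg1 _ (hf1 i hi),
    fun i j hij hj => hg2 _ _ (hf2 i j hij hj) (hf1 j hj),
    fun i hi => ht (hf3 i hi) (hg3 _ (hf1 i hi))⟩

theorem valEq_refl (σ : TSeq Q) : σ.ValEq σ := ⟨rfl, fun _ _ => rfl⟩

theorem valEq_symm {σ τ : TSeq Q} (h : σ.ValEq τ) : τ.ValEq σ :=
  ⟨h.1.symm, fun i hi => (h.2 i (by rw [h.1]; exact hi)).symm⟩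

theorem valEq_trans {σ τ ρ : TSeq Q} (h₁ : σ.ValEq τ) (h₂ : τ.ValEq ρ) : σ.ValEq ρ :=
  ⟨h₁.1.trans h₂.1, fun i hi => (h₁.2 i hi).trans (h₂.2 i (by rw [← h₁.1]; exact hi))⟩

theorem seqLE_congr {σ σ' τ τ' : TSeq Q} (hσ : σ.ValEq σ') (hτ : τ.ValEq τ')
    (h : SeqLE le σ τ) : SeqLE le σ' τ' := by
  obtain ⟨f, hf1, hf2, hf3⟩ := h
  refine ⟨f, fun i hi => ?_, fun i j hij hj => hf2 i j hij (by rw [hσ.1]; exact hj),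
    fun i hi => ?_⟩
  · rw [← hτ.1]; exact hf1 i (by rw [hσ.1]; exact hi)
  · have hi' : i < σ.length := by rw [hσ.1]; exact hi
    rw [← hσ.2 i hi', ← hτ.2 (f i) (hf1 i hi')]
    exact hf3 i hi'

theorem seqLE_of_valEq (hr : Reflexive le) {σ τ : TSeq Q} (h : σ.ValEq τ) : SeqLE le σ τ :=
  seqLE_congr (valEq_refl σ) h (seqLE_refl hr σ)

/-! ### Segments -/

/-- The segment of `σ` on the interval `[a, b)`. -/
noncomputable def seg (σ : TSeq Q) (a b : Ordinal.{u}) (h : a < b) : TSeq Q where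
  length := b - a
  length_pos := Ordinal.lt_sub.mpr (by simpa using h)
  val := fun i => σ.val (a + i)

theorem tail_eq_seg (σ : TSeq Q) (δ : Ordinal.{u}) (h : δ < σ.length) :
    σ.tail δ h = seg σ δ σ.length h := rfl

@[simp] theorem seg_length (σ : TSeq Q) (a b : Ordinal.{u}) (h : a < b) :
    (seg σ a b h).length = b - a := rfl

@[simp] theorem seg_val (σ : TSeq Q) (a b : Ordinal.{u}) (h : a < b) (i : Ordinal.{u}) :
    (seg σ a b h).val i = σ.val (a + i) := rfl

theorem lt_of_lt_seg_length {a b i : Ordinal.{u}} (hi : i < b - a) : a + i < b :=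
  Ordinal.lt_sub.mp hi

theorem seg_length_lt {a b i : Ordinal.{u}} (hi : a + i < b) : i < b - a :=
  Ordinal.lt_sub.mpr hi

theorem valEq_seg_zero (σ : TSeq Q) (h : (0:Ordinal.{u}) < σ.length) :
    (seg σ 0 σ.length h).ValEq σ := by
  constructor
  · simp [Ordinal.sub_zero]
  · intro i _; simp

theorem seg_finRange {σ : TSeq Q} (hfr : σ.FinRange) {a b : Ordinal.{u}} (h : a < b)
    (hb : b ≤ σ.length) : (seg σ a b h).FinRange := by
  refine Set.Finite.subset hfr ?_
  rintro x ⟨i, hi, rfl⟩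
  exact ⟨a + i, lt_of_lt_of_le (lt_of_lt_seg_length hi) hb, rfl⟩

/-- A subinterval's segment embeds into the bigger interval's segment. -/
theorem seqLE_seg_of_sub (hr : Reflexive le) (σ : TSeq Q) {a a' b' b : Ordinal.{u}}
    (haa : a ≤ a') (hab : a' < b') (hbb : b' ≤ b) :
    SeqLE le (seg σ a' b' hab) (seg σ a b (lt_of_le_of_lt haa (lt_of_lt_of_le hab hbb))) := by
  refine ⟨fun i => (a' - a) + i, fun i hi => ?_, fun i j hij _ => ?_, fun i hi => ?_⟩
  · apply seg_length_lt
    rw [← add_assoc, Ordinal.add_sub_cancel_of_le haa]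
    exact lt_of_lt_of_le (lt_of_lt_seg_length hi) hbb
  · exact add_lt_add_right hij _
  · rw [seg_val, seg_val, ← add_assoc, Ordinal.add_sub_cancel_of_le haa]
    exact hr _

/-- The tail of a segment is a segment. -/
theorem seg_tail_valEq (σ : TSeq Q) {a b : Ordinal.{u}} (hab : a < b) {ε : Ordinal.{u}}
    (hε : ε < (seg σ a b hab).length) :
    ((seg σ a b hab).tail ε hε).ValEq (seg σ (a + ε) b (lt_of_lt_seg_length hε)) := by
  constructor
  · show b - a - ε = b - (a + ε)
    rw [Ordinal.sub_sub]
  · intro i _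
    show σ.val (a + (ε + i)) = σ.val (a + ε + i)
    rw [add_assoc]

@[simp] theorem concat_length (σ τ : TSeq Q) :
    (σ.concat τ).length = σ.length + τ.length := rfl

theorem concat_val_lt {σ τ : TSeq Q} {i : Ordinal.{u}} (h : i < σ.length) :
    (σ.concat τ).val i = σ.val i := by
  simp only [TSeq.concat, if_pos h]

theorem concat_val_ge {σ τ : TSeq Q} {i : Ordinal.{u}} (h : σ.length ≤ i) :
    (σ.concat τ).val i = τ.val (i - σ.length) := by
  simp only [TSeq.concat, if_neg (not_lt.mpr h)]

theorem seg_concat_valEq (σ : TSeq Q) {a b c : Ordinal.{u}} (hab : a < b) (hbc : b < c) :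
    ((seg σ a b hab).concat (seg σ b c hbc)).ValEq (seg σ a c (hab.trans hbc)) := by
  have hlen : (b - a) + (c - b) = c - a := by
    rw [← add_right_inj a, ← add_assoc, Ordinal.add_sub_cancel_of_le hab.le,
      Ordinal.add_sub_cancel_of_le hbc.le, Ordinal.add_sub_cancel_of_le (hab.trans hbc).le]
  constructor
  · simpa using hlen
  · intro i hi
    rcases lt_or_ge i (b - a) with h | h
    · rw [concat_val_lt h]; rfl
    · rw [concat_val_ge h]
      show σ.val (b + (i - (b - a))) = σ.val (a + i)
      have e1 : a + i = b + (i - (b - a)) := by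
        conv_lhs => rw [← Ordinal.add_sub_cancel_of_le h]
        rw [← add_assoc, Ordinal.add_sub_cancel_of_le hab.le]
      rw [e1]

end SeqAux

namespace SeqAux

open Ordinal

variable {Q : Type u} {le : Q → Q → Prop}

theorem sub_lt_of_lt_add {a b c : Ordinal.{u}} (h : a < b + c) (hb : b ≤ a) : a - b < c := by
  have := Ordinal.add_sub_cancel_of_le hb
  rw [← add_lt_add_iff_left b, this]
  exact h

theorem seqLE_concat_mono {σ σ' τ τ' : TSeq Q} (h₁ : SeqLE le σ σ') (h₂ : SeqLE le τ τ') :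
    SeqLE le (σ.concat τ) (σ'.concat τ') := by
  classical
  obtain ⟨f, hf1, hf2, hf3⟩ := h₁
  obtain ⟨g, hg1, hg2, hg3⟩ := h₂
  refine ⟨fun i => if i < σ.length then f i else σ'.length + g (i - σ.length),
    fun i hi => ?_, fun i j hij hj => ?_, fun i hi => ?_⟩
  · beta_reduce
    by_cases h : i < σ.length
    · rw [if_pos h, concat_length]
      exact lt_of_lt_of_le (hf1 i h) (le_add_right le_rfl)
    · rw [if_neg h, concat_length, add_lt_add_iff_left]
      exact hg1 _ (sub_lt_of_lt_add hi (not_lt.mp h))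
  · beta_reduce
    by_cases hj' : j < σ.length
    · rw [if_pos (hij.trans hj'), if_pos hj']
      exact hf2 i j hij hj'
    · rw [if_neg hj']
      by_cases hi' : i < σ.length
      · rw [if_pos hi']
        exact lt_of_lt_of_le (hf1 i hi') (le_add_right le_rfl)
      · rw [if_neg hi', add_lt_add_iff_left]
        apply hg2
        · have hle : σ.length ≤ i := not_lt.mp hi'
          have h2 : σ.length + (i - σ.length) < σ.length + (j - σ.length) := by
            rwa [Ordinal.add_sub_cancel_of_le hle,
              Ordinal.add_sub_cancel_of_le (not_lt.mp hj')]
          exact lt_of_add_lt_add_left h2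
        · exact sub_lt_of_lt_add (by rwa [concat_length] at hj) (not_lt.mp hj')
  · beta_reduce
    by_cases h : i < σ.length
    · rw [if_pos h, concat_val_lt h, concat_val_lt (hf1 i h)]
      exact hf3 i h
    · rw [if_neg h, concat_val_ge (not_lt.mp h),
        concat_val_ge (le_add_right le_rfl), Ordinal.add_sub_cancel]
      exact hg3 _ (sub_lt_of_lt_add (by rwa [concat_length] at hi) (not_lt.mp h))

theorem seqLE_concat_left (hr : Reflexive le) (σ τ : TSeq Q) : SeqLE le σ (σ.concat τ) := by
  refine ⟨fun i => i, fun i hi => lt_of_lt_of_le hi (le_add_right le_rfl), fun _ _ h _ => h,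
    fun i hi => ?_⟩
  show le (σ.val i) ((σ.concat τ).val i)
  rw [concat_val_lt hi]; exact hr _

theorem seqLE_concat_right (hr : Reflexive le) (σ τ : TSeq Q) : SeqLE le τ (σ.concat τ) := by
  refine ⟨fun i => σ.length + i, fun i hi => by
      rw [concat_length]; exact add_lt_add_right hi _,
    fun i j hij _ => add_lt_add_right hij _, fun i hi => ?_⟩
  show le (τ.val i) ((σ.concat τ).val (σ.length + i))
  rw [concat_val_ge (le_add_right le_rfl), Ordinal.add_sub_cancel]
  exact hr _

theorem valEq_concat_congr {σ σ' τ τ' : TSeq Q} (h₁ : σ.ValEq σ') (h₂ : τ.ValEq τ') :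
    (σ.concat τ).ValEq (σ'.concat τ') := by
  refine ⟨by rw [concat_length, concat_length, h₁.1, h₂.1], fun i hi => ?_⟩
  by_cases h : i < σ.length
  · rw [concat_val_lt h, concat_val_lt (by rw [← h₁.1]; exact h), h₁.2 i h]
  · have h' : σ.length ≤ i := not_lt.mp h
    have hd : i - σ.length < τ.length :=
      sub_lt_of_lt_add (by rwa [concat_length] at hi) h'
    rw [concat_val_ge h', concat_val_ge (by rw [← h₁.1]; exact h'), ← h₁.1]
    exact h₂.2 _ hd

theorem concat_assoc_valEq (σ τ ρ : TSeq Q) :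
    ((σ.concat τ).concat ρ).ValEq (σ.concat (τ.concat ρ)) := by
  refine ⟨by simp only [concat_length, add_assoc], fun i hi => ?_⟩
  by_cases h1 : i < σ.length
  · rw [concat_val_lt (by rw [concat_length]; exact lt_of_lt_of_le h1 (le_add_right le_rfl)),
      concat_val_lt h1, concat_val_lt h1]
  · have h1' : σ.length ≤ i := not_lt.mp h1
    by_cases h2 : i < σ.length + τ.length
    · have hd : i - σ.length < τ.length := sub_lt_of_lt_add h2 h1'
      rw [concat_val_lt (show i < (σ.concat τ).length from h2), concat_val_ge h1',
        concat_val_ge h1', concat_val_lt hd]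
    · have h2' : σ.length + τ.length ≤ i := not_lt.mp h2
      have hd : τ.length ≤ i - σ.length := by
        rw [← add_le_add_iff_left σ.length, Ordinal.add_sub_cancel_of_le h1']
        exact h2'
      rw [concat_val_ge (show (σ.concat τ).length ≤ i from h2'), concat_val_ge h1',
        concat_val_ge hd, concat_length, Ordinal.sub_sub]

@[simp] theorem concatAll_nil (σ : TSeq Q) : TSeq.concatAll σ [] = σ := rfl

theorem concatAll_cons (σ t : TSeq Q) (ts : List (TSeq Q)) :
    TSeq.concatAll σ (t :: ts) = TSeq.concatAll (σ.concat t) ts := rfl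

theorem concatAll_append (σ : TSeq Q) (l₁ l₂ : List (TSeq Q)) :
    TSeq.concatAll σ (l₁ ++ l₂) = TSeq.concatAll (TSeq.concatAll σ l₁) l₂ :=
  List.foldl_append

theorem valEq_concatAll_congr {σ σ' : TSeq Q} (h : σ.ValEq σ') (l : List (TSeq Q)) :
    (TSeq.concatAll σ l).ValEq (TSeq.concatAll σ' l) := by
  induction l generalizing σ σ' with
  | nil => exact h
  | cons t ts ih =>
    rw [concatAll_cons, concatAll_cons]
    exact ih (valEq_concat_congr h (valEq_refl t))

theorem concatAll_concat_valEq (x t : TSeq Q) (ts : List (TSeq Q)) :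
    (x.concat (TSeq.concatAll t ts)).ValEq (TSeq.concatAll x (t :: ts)) := by
  induction ts generalizing x t with
  | nil => exact valEq_refl _
  | cons t' ts ih =>
    rw [concatAll_cons, concatAll_cons, concatAll_cons]
    exact valEq_trans (ih x (t.concat t'))
      (valEq_concatAll_congr (valEq_symm (concat_assoc_valEq x t t')) ts)

theorem seqLE_concatAll_self (hr : Reflexive le) (ht : Transitive le) (x : TSeq Q)
    (l : List (TSeq Q)) : SeqLE le x (TSeq.concatAll x l) := by
  induction l generalizing x with
  | nil => exact seqLE_refl hr x
  | cons t ts ih =>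
    rw [concatAll_cons]
    exact seqLE_trans ht (seqLE_concat_left hr x t) (ih _)

theorem seqLE_concatAll_heads (hr : Reflexive le) {x y : TSeq Q} (h : SeqLE le x y)
    (l : List (TSeq Q)) : SeqLE le (TSeq.concatAll x l) (TSeq.concatAll y l) := by
  induction l generalizing x y with
  | nil => exact h
  | cons t ts ih =>
    rw [concatAll_cons, concatAll_cons]
    exact ih (seqLE_concat_mono h (seqLE_refl hr t))

theorem seqLE_concatAll_of_sublistForall₂_aux (hr : Reflexive le) (ht : Transitive le)
    {l₁ l₂ : List (TSeq Q)} (h : List.SublistForall₂ (SeqLE le) l₁ l₂) :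
    ∀ x₁ x₂ : TSeq Q, SeqLE le x₁ x₂ →
      SeqLE le (TSeq.concatAll x₁ l₁) (TSeq.concatAll x₂ l₂) := by
  induction h with
  | nil =>
    intro x₁ x₂ hx
    exact seqLE_trans ht hx (seqLE_concatAll_self hr ht _ _)
  | cons hab _ ih =>
    intro x₁ x₂ hx
    rw [concatAll_cons, concatAll_cons]
    exact ih _ _ (seqLE_concat_mono hx hab)
  | cons_right _ ih =>
    intro x₁ x₂ hx
    rw [concatAll_cons]
    exact ih _ _ (seqLE_trans ht hx (seqLE_concat_left hr _ _))

theorem seqLE_concatAll_of_sublistForall₂ (hr : Reflexive le) (ht : Transitive le) :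
    ∀ (l₂' : List (TSeq Q)) (τ₁ : TSeq Q) (l₁ : List (TSeq Q)) (τ₂ : TSeq Q),
    List.SublistForall₂ (SeqLE le) (τ₁ :: l₁) (τ₂ :: l₂') →
      SeqLE le (TSeq.concatAll τ₁ l₁) (TSeq.concatAll τ₂ l₂') := by
  intro l₂'
  induction l₂' with
  | nil =>
    intro τ₁ l₁ τ₂ h
    cases h with
    | cons hab h' => exact seqLE_concatAll_of_sublistForall₂_aux hr ht h' _ _ hab
    | cons_right h' => cases h'
  | cons t ts ih =>
    intro τ₁ l₁ τ₂ h
    cases h with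
    | cons hab h' => exact seqLE_concatAll_of_sublistForall₂_aux hr ht h' _ _ hab
    | cons_right h' =>
      have := ih τ₁ l₁ t h'
      refine seqLE_trans ht this ?_
      rw [concatAll_cons]
      exact seqLE_concatAll_heads hr (seqLE_concat_right hr _ _) ts

end SeqAux

namespace SeqAux

open Ordinal

variable {Q : Type u} {le : Q → Q → Prop}

/-- Decomposability into a finite concatenation of indecomposables. -/
def Decomp (le : Q → Q → Prop) (σ : TSeq Q) : Prop :=
  ∃ τ τs, (∀ ρ ∈ τ :: τs, ρ.FinRange ∧ ρ.length ≤ σ.length ∧ Indecomposable le ρ) ∧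
    σ.ValEq (TSeq.concatAll τ τs)

theorem decomp_single {σ : TSeq Q} (hfr : σ.FinRange) (hind : Indecomposable le σ) :
    Decomp le σ := by
  refine ⟨σ, [], ?_, valEq_refl σ⟩
  intro ρ hρ
  simp only [List.mem_singleton] at hρ
  subst hρ
  exact ⟨hfr, le_rfl, hind⟩

theorem decomp_congr {σ σ' : TSeq Q} (hv : σ.ValEq σ') (h : Decomp le σ) : Decomp le σ' := by
  obtain ⟨τ, τs, hp, hv'⟩ := h
  exact ⟨τ, τs, fun ρ hρ => ⟨(hp ρ hρ).1, hv.1 ▸ (hp ρ hρ).2.1, (hp ρ hρ).2.2⟩,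
    valEq_trans (valEq_symm hv) hv'⟩

theorem decomp_concat {σ π₀ π₁ : TSeq Q} (hv : σ.ValEq (π₀.concat π₁))
    (h₀ : Decomp le π₀) (h₁ : Decomp le π₁) : Decomp le σ := by
  obtain ⟨τ₀, τs₀, hp₀, hv₀⟩ := h₀
  obtain ⟨τ₁, τs₁, hp₁, hv₁⟩ := h₁
  have hlen : σ.length = π₀.length + π₁.length := by rw [hv.1, concat_length]
  refine ⟨τ₀, τs₀ ++ τ₁ :: τs₁, ?_, ?_⟩
  · intro ρ hρ
    simp only [List.mem_cons, List.mem_append] at hρ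
    rcases hρ with h | h | h
    · obtain ⟨h1, h2, h3⟩ := hp₀ ρ (by simp [h])
      exact ⟨h1, h2.trans (by rw [hlen]; exact le_add_right le_rfl), h3⟩
    · obtain ⟨h1, h2, h3⟩ := hp₀ ρ (by simp [h])
      exact ⟨h1, h2.trans (by rw [hlen]; exact le_add_right le_rfl), h3⟩
    · obtain ⟨h1, h2, h3⟩ := hp₁ ρ (by simp [h])
      exact ⟨h1, h2.trans (by rw [hlen]; exact le_add_self), h3⟩
  · refine valEq_trans hv ?_
    refine valEq_trans (valEq_concat_congr hv₀ hv₁) ?_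
    refine valEq_trans (concatAll_concat_valEq _ _ _) ?_
    rw [← concatAll_append]
    exact valEq_refl _

/-- Key ordinal fact : if `ω^d ≤ α < ω^(d+1)` then `α - ω^d < α`. -/
theorem sub_opow_lt {α : Ordinal.{u}} {d : Ordinal.{u}}
    (h1 : omega0 ^ d ≤ α) (h2 : α < omega0 ^ (d + 1)) : α - omega0 ^ d < α := by
  by_contra hcon
  push_neg at hcon
  have habs : omega0 ^ d + α ≤ α := by
    calc omega0 ^ d + α ≤ omega0 ^ d + (α - omega0 ^ d) := add_le_add_right hcon _
    _ = α := Ordinal.add_sub_cancel_of_le h1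
  have hk : ∀ k : ℕ, omega0 ^ d * k + α ≤ α := by
    intro k
    induction k with
    | zero => simp
    | succ k ih =>
      have : ((k+1 : ℕ) : Ordinal.{u}) = (k : Ordinal.{u}) + 1 := by push_cast; ring
      rw [this, mul_add, mul_one, add_assoc]
      calc omega0 ^ d * k + (omega0 ^ d + α) ≤ omega0 ^ d * k + α :=
        add_le_add_right habs _
      _ ≤ α := ih
  have : omega0 ^ d * omega0 ≤ α := by
    rw [mul_le_iff_of_isSuccLimit isSuccLimit_omega0]
    intro b hb
    obtain ⟨k, rfl⟩ := lt_omega0.mp hb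
    exact le_trans (le_add_right le_rfl) (hk k)
  rw [Ordinal.add_one_eq_succ, opow_succ] at h2
  exact absurd h2 (not_lt.mpr this)

/-- `DecompAll d` : every nonempty finite-range sequence of length `< ω^d` (over any
quasi-order in universe `u`) decomposes. -/
def DecompAll (d : ℕ) : Prop :=
  ∀ (Q' : Type u) (le' : Q' → Q' → Prop), IsQO le' →
    ∀ σ : TSeq Q', σ.FinRange → σ.length < omega0 ^ (d : Ordinal.{u}) → Decomp le' σ

/-- `SplitStmt d` : statement (1) at exponent `d`. -/
def SplitStmt (d : ℕ) : Prop :=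
  ∀ (Q' : Type u) (le' : Q' → Q' → Prop), IsQO le' →
    ∀ σ : TSeq Q', σ.FinRange → σ.length = omega0 ^ (d : Ordinal.{u}) →
      Indecomposable le' σ ∨
        ∃ σ₀ σ₁ : TSeq Q',
          σ₀.FinRange ∧ σ₀.length < omega0 ^ (d : Ordinal.{u}) ∧
          σ₁.FinRange ∧ σ₁.length = omega0 ^ (d : Ordinal.{u}) ∧
          Indecomposable le' σ₁ ∧ σ.ValEq (σ₀.concat σ₁)

theorem decompAll_zero : DecompAll.{u} 0 := by
  intro Q' le' hqo' σ hfr hlen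
  rw [Nat.cast_zero, opow_zero] at hlen
  exact absurd (Ordinal.lt_one_iff_zero.mp hlen) (ne_of_gt σ.length_pos)

theorem splitStmt_zero : SplitStmt.{u} 0 := by
  intro Q' le' hqo' σ hfr hlen
  left
  intro δ hδ h
  rw [hlen, Nat.cast_zero, opow_zero] at h
  exact absurd (Ordinal.lt_one_iff_zero.mp h) (ne_of_gt hδ)

/-- From `Decomp` of a split to `Decomp` of a length-`ω^d` sequence. -/
theorem decomp_of_splitStmt (d : ℕ) (hD : DecompAll.{u} d) (hP : SplitStmt.{u} d)
    (Q' : Type u) (le' : Q' → Q' → Prop) (hqo' : IsQO le') (σ : TSeq Q')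
    (hfr : σ.FinRange) (hlen : σ.length = omega0 ^ (d : Ordinal.{u})) : Decomp le' σ := by
  rcases hP Q' le' hqo' σ hfr hlen with h | ⟨σ₀, σ₁, h1, h2, h3, h4, h5, h6⟩
  · exact decomp_single hfr h
  · refine decomp_concat h6 ?_ (decomp_single h3 h5)
    exact hD Q' le' hqo' σ₀ h1 h2

theorem decompAll_succ (d : ℕ) (hD : DecompAll.{u} d) (hP : SplitStmt.{u} d) :
    DecompAll.{u} (d + 1) := by
  intro Q' le' hqo' σ hfr hlen
  have key : ∀ α : Ordinal.{u}, ∀ σ : TSeq Q', σ.length = α → σ.FinRange →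
      σ.length < omega0 ^ ((d : Ordinal.{u}) + 1) → Decomp le' σ := by
    intro α
    induction α using Ordinal.induction with
    | h α IH =>
      intro σ hσα hfr hlt
      subst hσα
      rcases lt_or_ge σ.length (omega0 ^ (d : Ordinal.{u})) with hc | hc
      · exact hD Q' le' hqo' σ hfr hc
      rcases eq_or_lt_of_le hc with hc' | hc'
      · exact decomp_of_splitStmt d hD hP Q' le' hqo' σ hfr hc'.symm
      · -- ω^d < σ.length
        have hβpos : (0 : Ordinal.{u}) < omega0 ^ (d : Ordinal.{u}) := opow_pos _ omega0_pos
        set β := omega0 ^ (d : Ordinal.{u}) with hβ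
        have hβσ : β < σ.length := hc'
        have hγ : σ.length - β < σ.length := sub_opow_lt hc hlt
        have hv0 : ((seg σ 0 β hβpos).concat (σ.tail β hβσ)).ValEq σ := by
          refine valEq_trans (seg_concat_valEq σ hβpos hβσ) ?_
          exact valEq_seg_zero σ (lt_trans hβpos hβσ)
        refine decomp_concat (valEq_symm hv0) ?_ ?_
        · refine decomp_of_splitStmt d hD hP Q' le' hqo' _ ?_ ?_
          · exact seg_finRange hfr hβpos hβσ.le
          · rw [seg_length, Ordinal.sub_zero]
        · refine IH (σ.length - β) hγ (σ.tail β hβσ) rfl ?_ ?_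
          · exact seg_finRange hfr hβσ le_rfl
          · exact lt_trans hγ hlt
  exact key σ.length σ rfl hfr (by
    rwa [show ((d:ℕ)+1 : ℕ) = d + 1 from rfl, Nat.cast_add, Nat.cast_one] at hlen)

end SeqAux

namespace SeqAux

open Ordinal

variable {Q : Type u} {le : Q → Q → Prop}

theorem sublistForall₂_map {α β : Type*} {r : α → α → Prop} {s : β → β → Prop} {f : α → β}
    (hf : ∀ a b, r a b → s (f a) (f b)) :
    ∀ {l₁ l₂ : List α}, List.SublistForall₂ r l₁ l₂ →
      List.SublistForall₂ s (l₁.map f) (l₂.map f) := by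
  intro l₁ l₂ h
  induction h with
  | nil => exact List.SublistForall₂.nil
  | cons hab _ ih => exact List.SublistForall₂.cons (hf _ _ hab) ih
  | cons_right _ ih => exact List.SublistForall₂.cons_right ih

/-- The projection of a sequence over a subtype back to `Q`. -/
def projQ {S : Set Q} (w : TSeq ↥S) : TSeq Q :=
  ⟨w.length, w.length_pos, fun i => (w.val i).1⟩

theorem seqLE_projQ {S : Set Q} {u v : TSeq ↥S} (h : SeqLE (fun a b => le a.1 b.1) u v) :
    SeqLE le (projQ u) (projQ v) := by
  obtain ⟨f, h1, h2, h3⟩ := h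
  exact ⟨f, h1, h2, h3⟩

/-- wqo of uniformly-finite-range sequences of length `< ω^d`, given the main hypothesis
and decomposability at level `d`. -/
theorem wqo_short (n d : ℕ) (hdn : d ≤ n)
    (hyp : ∀ (P : Type u) (leP : P → P → Prop), Finite P → IsQO leP →
      IsWQO (fun σ τ : iF P leP (omega0 ^ (n : Ordinal.{u})) => SeqLE leP σ.1 τ.1))
    (hD : DecompAll.{u} d) (hqo : IsQO le)
    (S : Set Q) (hS : S.Finite) (g : ℕ → TSeq Q)
    (hlen : ∀ k, (g k).length < omega0 ^ (d : Ordinal.{u}))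
    (hmem : ∀ k i, i < (g k).length → (g k).val i ∈ S) :
    ∃ k l, k < l ∧ SeqLE le (g k) (g l) := by
  classical
  have hx0 : (g 0).val 0 ∈ S := hmem 0 0 (g 0).length_pos
  set P := ↥S
  haveI : Finite P := hS.to_subtype
  set leP : P → P → Prop := fun a b => le a.1 b.1 with hleP
  have hqoP : IsQO leP := ⟨fun a => hqo.1 a.1, fun a b c hab hbc => hqo.2 hab hbc⟩
  set gP : ℕ → TSeq P := fun k =>
    ⟨(g k).length, (g k).length_pos, fun i =>
      if h : i < (g k).length then ⟨(g k).val i, hmem k i h⟩ else ⟨(g 0).val 0, hx0⟩⟩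
    with hgP
  have hproj : ∀ k, (projQ (gP k)).ValEq (g k) := by
    intro k
    refine ⟨rfl, fun i hi => ?_⟩
    have hi' : i < (g k).length := hi
    simp only [projQ, hgP, dif_pos hi']
  have hdec : ∀ k, Decomp leP (gP k) := fun k =>
    hD P leP hqoP (gP k) (Set.toFinite _) (hlen k)
  choose τ τs hp hv using hdec
  have hωdn : omega0 ^ (d : Ordinal.{u}) ≤ omega0 ^ (n : Ordinal.{u}) :=
    opow_le_opow_right omega0_pos (by exact_mod_cast hdn)
  -- package as lists over iF
  set r : iF P leP (omega0 ^ (n : Ordinal.{u})) → iF P leP (omega0 ^ (n : Ordinal.{u})) → Prop :=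
    fun x y => SeqLE leP x.1 y.1 with hr
  haveI : IsRefl _ r := ⟨fun x => seqLE_refl hqoP.1 x.1⟩
  haveI : IsTrans _ r := ⟨fun x y z hxy hyz => seqLE_trans hqoP.2 hxy hyz⟩
  have hpwo : (Set.univ : Set (iF P leP (omega0 ^ (n : Ordinal.{u})))).PartiallyWellOrderedOn r :=
    fun f => (hyp P leP inferInstance hqoP).2 (fun k => (f k).1)
  haveI : IsPreorder _ r :=
    { refl := fun x => seqLE_refl hqoP.1 x.1, trans := fun x y z hxy hyz => seqLE_trans hqoP.2 hxy hyz }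
  have hpwoL := hpwo.partiallyWellOrderedOn_sublistForall₂ r
  set L : ℕ → List (iF P leP (omega0 ^ (n : Ordinal.{u}))) := fun k =>
    (τ k :: τs k).attach.map (fun x =>
      ⟨x.1, lt_of_le_of_lt ((hp k x.1 x.2).2.1) (lt_of_lt_of_le (hlen k) hωdn),
        (hp k x.1 x.2).1, (hp k x.1 x.2).2.2⟩) with hL
  obtain ⟨k, l, hkl, hSF⟩ := hpwoL (fun k => ⟨L k, fun x _ => Set.mem_univ x⟩)
  have hmap : ∀ k, (L k).map (fun x => x.1) = τ k :: τs k := by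
    intro k
    rw [hL]
    exact List.map_map.trans (List.attach_map_subtype_val _)
  have hSF' : List.SublistForall₂ (SeqLE leP) (τ k :: τs k) (τ l :: τs l) := by
    rw [← hmap k, ← hmap l]
    exact sublistForall₂_map (f := fun x : iF P leP (omega0 ^ (n : Ordinal.{u})) => x.1) (fun a b hab => hab) hSF
  have hle1 : SeqLE leP (TSeq.concatAll (τ k) (τs k)) (TSeq.concatAll (τ l) (τs l)) :=
    seqLE_concatAll_of_sublistForall₂ hqoP.1 hqoP.2 _ _ _ _ hSF'
  have hle2 : SeqLE leP (gP k) (gP l) :=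
    seqLE_congr (valEq_symm (hv k)) (valEq_symm (hv l)) hle1
  refine ⟨k, l, hkl, ?_⟩
  exact seqLE_congr (hproj k) (hproj l) (seqLE_projQ hle2)

end SeqAux

namespace SeqAux

open Ordinal

variable {Q : Type u} {le : Q → Q → Prop}

theorem sub_lt_sub_right' {a b c : Ordinal.{u}} (h : a < b) (hc : c ≤ a) : a - c < b - c := by
  rw [Ordinal.lt_sub, Ordinal.add_sub_cancel_of_le hc]
  exact h

/-- Gluing blockwise embeddings along a cofinal `ω`-sequence : if consecutive blocks embed
into their successors, the tail at `e 0` embeds into the tail at `e 1`. -/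
theorem seqLE_tail_glue (σ : TSeq Q) (e : ℕ → Ordinal.{u}) (he : StrictMono e)
    (hlt : ∀ m, e m < σ.length)
    (hcof : ∀ β, β < σ.length → ∃ m, β < e m)
    (hemb : ∀ m, SeqLE le (seg σ (e m) (e (m+1)) (he (Nat.lt_succ_self m)))
                         (seg σ (e (m+1)) (e (m+2)) (he (Nat.lt_succ_self (m+1))))) :
    SeqLE le (σ.tail (e 0) (hlt 0)) (σ.tail (e 1) (hlt 1)) := by
  classical
  choose f hf using hemb
  have hf1 : ∀ m i, i < e (m+1) - e m → f m i < e (m+2) - e (m+1) := fun m => (hf m).1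
  have hf2 : ∀ m i j, i < j → j < e (m+1) - e m → f m i < f m j := fun m => (hf m).2.1
  have hf3 : ∀ m i, i < e (m+1) - e m →
      le (σ.val (e m + i)) (σ.val (e (m+1) + f m i)) := fun m => (hf m).2.2
  have hex : ∀ p : Ordinal.{u}, p < σ.length → ∃ m : ℕ, p < e (m + 1) := by
    intro p hp
    obtain ⟨m, hm⟩ := hcof p hp
    exact ⟨m, lt_of_lt_of_le hm (he.monotone (Nat.le_succ m))⟩
  set K : ∀ p : Ordinal.{u}, p < σ.length → ℕ := fun p hp => Nat.find (hex p hp) with hKdef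
  have hK1 : ∀ p hp, p < e (K p hp + 1) := fun p hp => Nat.find_spec (hex p hp)
  have hK2 : ∀ p hp, e 0 ≤ p → e (K p hp) ≤ p := by
    intro p hp hp0
    rcases Nat.eq_zero_or_pos (K p hp) with h0 | h0
    · rw [h0]; exact hp0
    · have hmin := Nat.find_min (hex p hp) (show K p hp - 1 < K p hp from Nat.sub_lt h0 one_pos)
      rw [not_lt] at hmin
      have hKe : K p hp - 1 + 1 = K p hp := by omega
      rwa [hKe] at hmin
  have hKmono : ∀ p q hp hq, p ≤ q → K p hp ≤ K q hq := by
    intro p q hp hq hpq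
    exact Nat.find_mono (fun m hm => lt_of_le_of_lt hpq hm)
  set F : Ordinal.{u} → Ordinal.{u} := fun ι =>
    if h : e 0 + ι < σ.length then
      (e (K (e 0 + ι) h + 1) + f (K (e 0 + ι) h) ((e 0 + ι) - e (K (e 0 + ι) h))) - e 1
    else 0 with hFdef
  have hFspec : ∀ ι (h : e 0 + ι < σ.length),
      F ι = (e (K (e 0 + ι) h + 1) + f (K (e 0 + ι) h) ((e 0 + ι) - e (K (e 0 + ι) h))) - e 1 :=
    fun ι h => dif_pos h
  -- generic facts about the image point
  have hq_lt : ∀ p (hp : p < σ.length) (hp0 : e 0 ≤ p),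
      e (K p hp + 1) + f (K p hp) (p - e (K p hp)) < e (K p hp + 2) := by
    intro p hp hp0
    apply Ordinal.lt_sub.mp
    apply hf1
    apply Ordinal.lt_sub.mpr
    rw [Ordinal.add_sub_cancel_of_le (hK2 p hp hp0)]
    exact hK1 p hp
  have hq_ge : ∀ p (hp : p < σ.length),
      e 1 ≤ e (K p hp + 1) + f (K p hp) (p - e (K p hp)) := by
    intro p hp
    exact le_trans (he.monotone (Nat.succ_le_succ (Nat.zero_le _))) (le_add_right le_rfl)
  refine ⟨F, ?_, ?_, ?_⟩
  · -- maps into the tail at e 1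
    intro ι hι
    have hp : e 0 + ι < σ.length := Ordinal.lt_sub.mp hι
    show F ι < σ.length - e 1
    rw [hFspec ι hp]
    apply sub_lt_sub_right' _ (hq_ge _ hp)
    exact lt_trans (hq_lt _ hp (le_add_right le_rfl)) (hlt _)
  · -- strictly monotone
    intro ι ι' hii hι'
    have hp' : e 0 + ι' < σ.length := Ordinal.lt_sub.mp hι'
    have hpp : e 0 + ι < e 0 + ι' := add_lt_add_right hii _
    have hp : e 0 + ι < σ.length := lt_trans hpp hp'
    show F ι < F ι'
    rw [hFspec ι hp, hFspec ι' hp']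
    have hp0 : e 0 ≤ e 0 + ι := le_add_right le_rfl
    have hkk : K (e 0 + ι) hp ≤ K (e 0 + ι') hp' := hKmono _ _ hp hp' hpp.le
    apply sub_lt_sub_right' _ (hq_ge _ hp)
    rcases eq_or_lt_of_le hkk with heq | hlt'
    · -- same block
      rw [← heq]
      apply add_lt_add_right
      apply hf2
      · exact sub_lt_sub_right' hpp (hK2 _ hp hp0)
      · apply Ordinal.lt_sub.mpr
        rw [Ordinal.add_sub_cancel_of_le (le_trans (hK2 _ hp hp0) hpp.le)]
        rw [heq]
        exact hK1 _ hp'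
    · -- later block
      refine lt_of_lt_of_le (hq_lt _ hp hp0) (le_trans ?_ (le_add_right le_rfl))
      exact he.monotone (by omega)
  · -- values
    intro ι hι
    have hp : e 0 + ι < σ.length := Ordinal.lt_sub.mp hι
    have hp0 : e 0 ≤ e 0 + ι := le_add_right le_rfl
    show le (σ.val (e 0 + ι)) (σ.val (e 1 + F ι))
    rw [hFspec ι hp, Ordinal.add_sub_cancel_of_le (hq_ge _ hp)]
    have hrel : (e 0 + ι) - e (K (e 0 + ι) hp) < e (K (e 0 + ι) hp + 1) - e (K (e 0 + ι) hp) := by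
      apply Ordinal.lt_sub.mpr
      rw [Ordinal.add_sub_cancel_of_le (hK2 _ hp hp0)]
      exact hK1 _ hp
    have := hf3 (K (e 0 + ι) hp) _ hrel
    rwa [Ordinal.add_sub_cancel_of_le (hK2 _ hp hp0)] at this

end SeqAux

namespace SeqAux

open Ordinal

variable {Q : Type u} {le : Q → Q → Prop}

theorem splitStmt_of_decompAll (n d : ℕ) (hdn : d ≤ n)
    (hyp : ∀ (P : Type u) (leP : P → P → Prop), Finite P → IsQO leP →
      IsWQO (fun σ τ : iF P leP (omega0 ^ (n : Ordinal.{u})) => SeqLE leP σ.1 τ.1))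
    (hD : DecompAll.{u} d) : SplitStmt.{u} d := by
  rcases Nat.eq_zero_or_pos d with rfl | hd
  · exact splitStmt_zero
  intro Q le hqo σ hfr hlen
  classical
  -- basic structure of the length
  have hcast : (d : Ordinal.{u}) = ((d - 1 : ℕ) : Ordinal.{u}) + 1 := by
    have h1 : d - 1 + 1 = d := Nat.succ_pred_eq_of_pos hd
    rw [← h1]; push_cast; ring
  have hαeq : σ.length = omega0 ^ ((d - 1 : ℕ) : Ordinal.{u}) * omega0 := by
    rw [hlen, hcast, Ordinal.add_one_eq_succ, opow_succ]
  have hαlim : Order.IsSuccLimit σ.length := by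
    rw [hαeq]; exact isSuccLimit_mul_right (opow_pos _ omega0_pos) isSuccLimit_omega0
  set lamk : ℕ → Ordinal.{u} := fun k => omega0 ^ ((d - 1 : ℕ) : Ordinal.{u}) * k with hlamk
  have hlam : ∀ k : ℕ, lamk k < σ.length := by
    intro k
    rw [hαeq]
    exact mul_lt_mul_of_pos_left (nat_lt_omega0 k) (opow_pos _ omega0_pos)
  have hlamcof : ∀ β, β < σ.length → ∃ k : ℕ, β < lamk k := by
    intro β hβ
    rw [hαeq] at hβ
    obtain ⟨c, hc, hβc⟩ := (lt_mul_iff_of_isSuccLimit isSuccLimit_omega0).mp hβ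
    obtain ⟨k, rfl⟩ := lt_omega0.mp hc
    exact ⟨k, hβc⟩
  by_cases hgood : ∃ δ, ∃ _ : δ < σ.length, ∀ β, β < σ.length →
      ∃ δ', ∃ hd' : δ' < σ.length, β ≤ δ' ∧
        SeqLE le (σ.tail δ ‹δ < σ.length›) (σ.tail δ' hd')
  · -- a good point exists : split (or indecomposable)
    obtain ⟨δ, hδ, hGood⟩ := hgood
    rcases eq_or_lt_of_le (zero_le : (0 : Ordinal.{u}) ≤ δ) with hδ0 | hδ0
    · -- δ = 0 : σ itself is indecomposable
      subst hδ0
      left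
      intro ε hε0 hεlen
      obtain ⟨δ', hd', hβδ', hSle⟩ := hGood ε hεlen
      have h1 : SeqLE le σ (σ.tail 0 hδ) := by
        refine seqLE_of_valEq hqo.1 (valEq_symm ?_)
        rw [tail_eq_seg]
        exact valEq_seg_zero σ σ.length_pos
      have h2 : SeqLE le (σ.tail δ' hd') (σ.tail ε hεlen) := by
        rw [tail_eq_seg, tail_eq_seg]
        exact seqLE_seg_of_sub hqo.1 σ hβδ' hd' le_rfl
      exact seqLE_trans hqo.2 h1 (seqLE_trans hqo.2 hSle h2)
    · -- δ > 0 : split at δ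
      right
      refine ⟨seg σ 0 δ hδ0, σ.tail δ hδ, seg_finRange hfr hδ0 hδ.le, ?_,
        seg_finRange hfr hδ le_rfl, ?_, ?_, ?_⟩
      · rw [seg_length, Ordinal.sub_zero, ← hlen]; exact hδ
      · show σ.length - δ = _
        rw [hlen]
        have habs : δ + omega0 ^ (d : Ordinal.{u}) = omega0 ^ (d : Ordinal.{u}) :=
          add_omega0_opow (by rw [← hlen]; exact hδ)
        have h2 : δ + (omega0 ^ (d : Ordinal.{u}) - δ) = δ + omega0 ^ (d : Ordinal.{u}) := by
          rw [Ordinal.add_sub_cancel_of_le (by rw [← hlen]; exact hδ.le), habs]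
        exact (add_right_inj δ).mp h2
      · -- tail δ is indecomposable
        intro ε hε0 hεlen
        have hδε : δ + ε < σ.length := Ordinal.lt_sub.mp hεlen
        obtain ⟨δ', hd', hβδ', hSle⟩ := hGood (δ + ε) hδε
        have h2 : SeqLE le (σ.tail δ' hd') (seg σ (δ + ε) σ.length hδε) := by
          rw [tail_eq_seg]
          exact seqLE_seg_of_sub hqo.1 σ hβδ' hd' le_rfl
        refine seqLE_congr (valEq_refl _) (valEq_symm ?_) (seqLE_trans hqo.2 hSle h2)
        rw [tail_eq_seg]
        exact seg_tail_valEq σ hδ hεlen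
      · exact valEq_symm (valEq_trans (seg_concat_valEq σ hδ0 hδ) (valEq_seg_zero σ σ.length_pos))
  · -- no good point : derive a contradiction
    exfalso
    have hbadall : ∀ δ (hδ : δ < σ.length), ∃ β, β < σ.length ∧
        ∀ δ' (hd' : δ' < σ.length), β ≤ δ' →
          ¬ SeqLE le (σ.tail δ hδ) (σ.tail δ' hd') := by
      intro δ hδ
      by_contra hcon
      push_neg at hcon
      apply hgood
      refine ⟨δ, hδ, ?_⟩
      intro β hβ
      obtain ⟨δ', hd', hle, hS⟩ := hcon β hβ
      exact ⟨δ', hd', hle, hS⟩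
    choose bβ hbβ1 hbβ2 using hbadall
    -- build a strictly increasing cofinal bad sequence
    let dseq : ℕ → {x : Ordinal.{u} // x < σ.length} := fun m =>
      Nat.rec ⟨0, σ.length_pos⟩
        (fun k p => ⟨max (max (p.1 + 1) (lamk k)) (bβ p.1 p.2),
          max_lt (max_lt (by rw [Ordinal.add_one_eq_succ]; exact hαlim.succ_lt p.2) (hlam k))
            (hbβ1 p.1 p.2)⟩) m
    have hdstep : ∀ k, (dseq (k + 1)).1 =
        max (max ((dseq k).1 + 1) (lamk k)) (bβ (dseq k).1 (dseq k).2) := fun k => rfl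
    have hdlt : ∀ k, (dseq k).1 < (dseq (k + 1)).1 := by
      intro k
      rw [hdstep]
      refine lt_of_lt_of_le ?_ (le_trans (le_max_left _ _) (le_max_left _ _))
      simpa using (add_lt_add_right zero_lt_one (dseq k).1)
    have hmono : StrictMono (fun k => (dseq k).1) := strictMono_nat_of_lt_succ hdlt
    have hlamle : ∀ k, lamk k ≤ (dseq (k + 1)).1 := by
      intro k
      rw [hdstep]
      exact le_trans (le_max_right _ _) (le_max_left _ _)
    have hbble : ∀ k, bβ (dseq k).1 (dseq k).2 ≤ (dseq (k + 1)).1 := by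
      intro k
      rw [hdstep]
      exact le_max_right _ _
    have hbad : ∀ i j, i < j →
        ¬ SeqLE le (σ.tail (dseq i).1 (dseq i).2) (σ.tail (dseq j).1 (dseq j).2) := by
      intro i j hij
      exact hbβ2 (dseq i).1 (dseq i).2 (dseq j).1 (dseq j).2
        (le_trans (hbble i) (hmono.monotone hij))
    -- blocks
    let bl : ℕ → ℕ → TSeq Q := fun i j =>
      if h : i < j then seg σ (dseq i).1 (dseq j).1 (hmono h) else σ
    have hbl : ∀ i j (h : i < j), bl i j = seg σ (dseq i).1 (dseq j).1 (hmono h) :=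
      fun i j h => dif_pos h
    have hsub : ∀ i j k l, i ≤ j → (hjk : j < k) → k ≤ l →
        SeqLE le (bl j k) (bl i l) := by
      intro i j k l hij hjk hkl
      rw [hbl j k hjk, hbl i l (lt_of_le_of_lt hij (lt_of_lt_of_le hjk hkl))]
      exact seqLE_seg_of_sub hqo.1 σ (hmono.monotone hij) (hmono hjk) (hmono.monotone hkl)
    have hbl_len : ∀ i j, i < j → (bl i j).length < omega0 ^ (d : Ordinal.{u}) := by
      intro i j h
      rw [hbl i j h, seg_length, ← hlen]
      exact lt_of_le_of_lt (Ordinal.sub_le.mpr (le_add_self)) (dseq j).2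
    have hbl_mem : ∀ i j, i < j → ∀ ι, ι < (bl i j).length →
        (bl i j).val ι ∈ σ.val '' Set.Iio σ.length := by
      intro i j h ι hι
      rw [hbl i j h] at hι ⊢
      rw [seg_val]
      exact ⟨(dseq i).1 + ι,
        lt_trans (lt_of_lt_seg_length hι) (dseq j).2, rfl⟩
    -- main combinatorial dichotomy
    by_cases hM : ∃ M : ℕ, ∀ i j : ℕ, i < j → M ≤ i →
        ∃ k, j < k ∧ SeqLE le (bl i j) (bl j k)
    · -- extendable everywhere beyond M : build an infinite path and glue
      obtain ⟨M, hMy⟩ := hM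
      let R := {q : ℕ × ℕ // q.1 < q.2 ∧ M ≤ q.1}
      let gstep : R → R := fun q =>
        ⟨(q.1.2, (hMy q.1.1 q.1.2 q.2.1 q.2.2).choose),
          (hMy q.1.1 q.1.2 q.2.1 q.2.2).choose_spec.1,
          le_trans q.2.2 q.2.1.le⟩
      have hgstep : ∀ q : R, SeqLE le (bl q.1.1 q.1.2) (bl (gstep q).1.1 (gstep q).1.2) :=
        fun q => (hMy q.1.1 q.1.2 q.2.1 q.2.2).choose_spec.2
      let path : ℕ → R := fun m => gstep^[m] ⟨(M, M + 1), Nat.lt_succ_self M, le_rfl⟩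
      let am : ℕ → ℕ := fun m => (path m).1.1
      have hpath_succ : ∀ m, path (m + 1) = gstep (path m) := by
        intro m
        exact Function.iterate_succ_apply' gstep m _
      have ham1 : ∀ m, am (m + 1) = (path m).1.2 := by
        intro m
        show (path (m + 1)).1.1 = _
        rw [hpath_succ]
      have hconn : ∀ m, SeqLE le (bl (am m) (am (m + 1))) (bl (am (m + 1)) (am (m + 2))) := by
        intro m
        have h := hgstep (path m)
        rw [ham1 m, ham1 (m + 1), hpath_succ m]
        exact h
      have hamlt : ∀ m, am m < am (m + 1) := by
        intro m
        rw [ham1]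
        exact (path m).2.1
      have hamono : StrictMono am := strictMono_nat_of_lt_succ hamlt
      let e : ℕ → Ordinal.{u} := fun m => (dseq (am m)).1
      have he : StrictMono e := fun a b h => hmono (hamono h)
      have helt : ∀ m, e m < σ.length := fun m => (dseq (am m)).2
      have hecof : ∀ β, β < σ.length → ∃ m, β < e m := by
        intro β hβ
        obtain ⟨k, hk⟩ := hlamcof β hβ
        refine ⟨k + 1, lt_of_lt_of_le hk (le_trans (hlamle k) ?_)⟩
        exact hmono.monotone (hamono.le_apply)
      have hemb : ∀ m, SeqLE le (seg σ (e m) (e (m + 1)) (he (Nat.lt_succ_self m)))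
          (seg σ (e (m + 1)) (e (m + 2)) (he (Nat.lt_succ_self (m + 1)))) := by
        intro m
        have h := hconn m
        rwa [hbl _ _ (hamono (Nat.lt_succ_self m)), hbl _ _ (hamono (Nat.lt_succ_self (m+1)))] at h
      have hglue := seqLE_tail_glue σ e he helt hecof hemb
      exact hbad (am 0) (am 1) (hamono (Nat.lt_succ_self 0)) hglue
    · -- non-extendable pairs occur arbitrarily late : a bad sequence of blocks
      push_neg at hM
      have hB : ∀ M : ℕ, ∃ i j : ℕ, M ≤ i ∧ i < j ∧
          ∀ k, j < k → ¬ SeqLE le (bl i j) (bl j k) := by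
        intro M
        obtain ⟨i, j, hij, hMi, hne⟩ := hM M
        exact ⟨i, j, hMi, hij, fun k hk hS => hne k hk hS⟩
      choose fi fj hfi hfj hfne using hB
      let Ms : ℕ → ℕ := fun m => Nat.rec 0 (fun _ prev => fj prev + 1) m
      have hMs : ∀ m, Ms (m + 1) = fj (Ms m) + 1 := fun m => rfl
      have hgrow : ∀ m, fj (Ms m) < fi (Ms (m + 1)) := by
        intro m
        have h1 : Ms (m + 1) ≤ fi (Ms (m + 1)) := hfi (Ms (m + 1))
        have h2 : fj (Ms m) < Ms (m + 1) := by rw [hMs]; omega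
        omega
      have hchain : ∀ m l, m < l → fj (Ms m) < fi (Ms l) := by
        intro m l hml
        induction l with
        | zero => omega
        | succ l ih =>
          rcases Nat.lt_succ_iff_lt_or_eq.mp hml with h | h
          · exact lt_trans (lt_trans (ih h) (hfj (Ms l))) (hgrow l)
          · subst h; exact hgrow m
      obtain ⟨m, l, hml, hSle⟩ := wqo_short n d hdn hyp hD hqo
        (σ.val '' Set.Iio σ.length) hfr
        (fun m => bl (fi (Ms m)) (fj (Ms m)))
        (fun m => hbl_len _ _ (hfj (Ms m)))
        (fun m ι hι => hbl_mem _ _ (hfj (Ms m)) ι hι)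
      have h2 : SeqLE le (bl (fi (Ms l)) (fj (Ms l))) (bl (fj (Ms m)) (fj (Ms l))) :=
        hsub (fj (Ms m)) (fi (Ms l)) (fj (Ms l)) (fj (Ms l))
          (le_of_lt (hchain m l hml)) (hfj (Ms l)) le_rfl
      exact hfne (Ms m) (fj (Ms l)) (lt_trans (hchain m l hml) (hfj (Ms l)))
        (seqLE_trans hqo.2 hSle h2)

end SeqAux

/-- Fix `n < ω` and assume that for every finite quasi-order `P` the quasi-order
`i^F_{ω^n}(P)` is a wqo.  Then, for any quasi-order `Q` :
(1) every finite-range sequence `σ` over `Q` of length exactly `ω^n` is either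
indecomposable or decomposes as `σ₀ + σ₁` with `σ₀` finite-range of length `< ω^n` and
`σ₁` indecomposable finite-range of length exactly `ω^n`; and
(2) every finite-range sequence over `Q` of length `< ω^{n+1}` decomposes as a finite
concatenation of indecomposable finite-range sequences of length `< ω^{n+1}`. -/
theorem sequence_decomposition (n : ℕ)
    (hyp : ∀ (P : Type u) (leP : P → P → Prop), Finite P → IsQO leP →
      IsWQO (fun σ τ : iF P leP (omega0 ^ (n : Ordinal.{u})) => SeqLE leP σ.1 τ.1))
    (Q : Type u) (le : Q → Q → Prop) (hqo : IsQO le) :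
    (∀ σ : TSeq Q, σ.FinRange → σ.length = omega0 ^ (n : Ordinal.{u}) →
      (Indecomposable le σ ∨
        ∃ σ₀ σ₁ : TSeq Q,
          σ₀.FinRange ∧ σ₀.length < omega0 ^ (n : Ordinal.{u}) ∧
          σ₁.FinRange ∧ σ₁.length = omega0 ^ (n : Ordinal.{u}) ∧
          Indecomposable le σ₁ ∧ σ.ValEq (σ₀.concat σ₁))) ∧
    (∀ σ : TSeq Q, σ.FinRange → σ.length < omega0 ^ ((n : Ordinal.{u}) + 1) →
      ∃ (τ : TSeq Q) (τs : List (TSeq Q)),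
        (∀ ρ ∈ τ :: τs,
          ρ.FinRange ∧ ρ.length < omega0 ^ ((n : Ordinal.{u}) + 1) ∧
            Indecomposable le ρ) ∧
        σ.ValEq (TSeq.concatAll τ τs)) := by
  have hDS : ∀ d : ℕ, d ≤ n + 1 → SeqAux.DecompAll.{u} d := by
    intro d
    induction d with
    | zero => intro _; exact SeqAux.decompAll_zero
    | succ d ih =>
      intro hdn
      have hD : SeqAux.DecompAll.{u} d := ih (by omega)
      exact SeqAux.decompAll_succ d hD (SeqAux.splitStmt_of_decompAll n d (by omega) hyp hD)
  constructor
  · intro σ hfr hlen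
    exact SeqAux.splitStmt_of_decompAll n n le_rfl hyp (hDS n (by omega)) Q le hqo σ hfr hlen
  · intro σ hfr hlen
    have hlen' : σ.length < omega0 ^ ((n + 1 : ℕ) : Ordinal.{u}) := by
      rwa [Nat.cast_add, Nat.cast_one]
    obtain ⟨τ, τs, hp, hv⟩ := hDS (n + 1) le_rfl Q le hqo σ hfr hlen'
    refine ⟨τ, τs, ?_, hv⟩
    intro ρ hρ
    obtain ⟨h1, h2, h3⟩ := hp ρ hρ
    exact ⟨h1, lt_of_le_of_lt h2 hlen, h3⟩
end
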